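/- Let r, k ≥ 2 with r + k > 4, and let H₁, H₂ be k-dense r-uniform hypergraphs with H₁ not a subhypergraph of H₂. Then ex(H₁ ∪ H₂) ≥ ex(H₂) + 1. -/

import Mathlib

/-- An `r`-uniform hypergraph: a finite vertex set and a finite set of edges,
each edge a set of `r` vertices. -/
structure UHypergraph (r : ℕ) where
  verts : Finset ℕ
  edges : Finset (Finset ℕ)
  card_edge : ∀ e ∈ edges, e.card = r
  support : ∀ e ∈ edges, e ⊆ verts

/-- The degree of a vertex: the number of edges containing it. -/
def UHypergraph.degree {r : ℕ} (H : UHypergraph r) (v : ℕ) : ℕ :=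
  (H.edges.filter (fun e => v ∈ e)).card

/-- `H` is `k`-dense if every vertex has degree at least `k`. -/
def UHypergraph.KDense {r : ℕ} (k : ℕ) (H : UHypergraph r) : Prop :=
  ∀ v ∈ H.verts, k ≤ H.degree v

/-- The excess of a hypergraph: `(r-1)·e(H) - |H|`. -/
def UHypergraph.excess {r : ℕ} (H : UHypergraph r) : ℤ :=
  ((r : ℤ) - 1) * H.edges.card - H.verts.card

/-- `H` is a subhypergraph of `G`: vertex and edge sets are contained in those of `G`. -/
def UHypergraph.Subhypergraph {r : ℕ} (H G : UHypergraph r) : Prop :=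
  H.verts ⊆ G.verts ∧ H.edges ⊆ G.edges

/-- The union of two hypergraphs: union of vertex sets and of edge sets. -/
def UHypergraph.union {r : ℕ} (H₁ H₂ : UHypergraph r) : UHypergraph r where
  verts := H₁.verts ∪ H₂.verts
  edges := H₁.edges ∪ H₂.edges
  card_edge := by
    intro e he
    rcases Finset.mem_union.1 he with h | h
    exacts [H₁.card_edge e h, H₂.card_edge e h]
  support := by
    intro e he
    rcases Finset.mem_union.1 he with h | h
    · exact (H₁.support e h).trans Finset.subset_union_left
    · exact (H₂.support e h).trans Finset.subset_union_right

/-- For `k`-dense hypergraphs `H₁ ⊄ H₂` (with `r, k ≥ 2`, `r + k > 4`), the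
union has excess at least `ex(H₂) + 1`. -/
theorem excess_union_kdense {r k : ℕ} (hr : 2 ≤ r) (hk : 2 ≤ k)
    (hrk : 4 < r + k) (H₁ H₂ : UHypergraph r)
    (h₁ : H₁.KDense k) (h₂ : H₂.KDense k) (hns : ¬ H₁.Subhypergraph H₂) :
    H₂.excess + 1 ≤ (H₁.union H₂).excess := by
  classical
  set S := H₁.verts \ H₂.verts with hS
  set T := H₁.edges \ H₂.edges with hT
  have hcount : k * S.card ≤ r * T.card := by
    have h1 : ∀ v ∈ S, k ≤ (T.filter (fun e => v ∈ e)).card := by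
      intro v hv
      have hv1 : v ∈ H₁.verts := (Finset.mem_sdiff.1 hv).1
      have hv2 : v ∉ H₂.verts := (Finset.mem_sdiff.1 hv).2
      have hsub : H₁.edges.filter (fun e => v ∈ e) ⊆ T.filter (fun e => v ∈ e) := by
        intro e he
        rw [Finset.mem_filter] at he ⊢
        exact ⟨Finset.mem_sdiff.2 ⟨he.1, fun h2 => hv2 (H₂.support e h2 he.2)⟩, he.2⟩
      exact le_trans (h₁ v hv1) (Finset.card_le_card hsub)
    calc k * S.card = ∑ _v ∈ S, k := by rw [Finset.sum_const, smul_eq_mul, mul_comm]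
      _ ≤ ∑ v ∈ S, (T.filter (fun e => v ∈ e)).card := Finset.sum_le_sum h1
      _ = ∑ v ∈ S, ∑ e ∈ T, (if v ∈ e then 1 else 0) :=
          Finset.sum_congr rfl fun v _ => Finset.card_filter _ _
      _ = ∑ e ∈ T, ∑ v ∈ S, (if v ∈ e then 1 else 0) := Finset.sum_comm
      _ = ∑ e ∈ T, (S.filter (fun v => v ∈ e)).card :=
          Finset.sum_congr rfl fun e _ => (Finset.card_filter _ _).symm
      _ ≤ ∑ _e ∈ T, r := by
          refine Finset.sum_le_sum fun e he => ?_
          have hc := H₁.card_edge e (Finset.mem_sdiff.1 he).1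
          calc (S.filter (fun v => v ∈ e)).card ≤ e.card :=
                Finset.card_le_card (fun v hv => (Finset.mem_filter.1 hv).2)
            _ = r := hc
      _ = r * T.card := by rw [Finset.sum_const, smul_eq_mul, mul_comm]
  have hkey : S.card + 1 ≤ (r - 1) * T.card := by
    rcases Nat.eq_zero_or_pos S.card with h0 | hpos
    · have hV : H₁.verts ⊆ H₂.verts := by
        rw [← Finset.sdiff_eq_empty_iff_subset]
        exact Finset.card_eq_zero.1 h0
      have hm : T.Nonempty := by
        rw [Finset.sdiff_nonempty]
        exact fun hE => hns ⟨hV, hE⟩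
      have hm1 : 1 ≤ T.card := Finset.card_pos.2 hm
      have : 1 * 1 ≤ (r - 1) * T.card := Nat.mul_le_mul (by omega) hm1
      omega
    · have hm1 : 1 ≤ T.card := by
        by_contra h
        have : T.card = 0 := by omega
        rw [this] at hcount
        have : k * S.card ≥ 1 * 1 := Nat.mul_le_mul (by omega) hpos
        omega
      by_contra h
      push_neg at h
      have hle : (r - 1) * T.card ≤ S.card := by omega
      have h2 : k * ((r - 1) * T.card) ≤ r * T.card :=
        le_trans (Nat.mul_le_mul_left _ hle) hcount
      have h2' : (k * (r - 1)) * T.card ≤ r * T.card := by rw [mul_assoc]; exact h2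
      have h3 : k * (r - 1) ≤ r := Nat.le_of_mul_le_mul_right h2' (by omega)
      have h4 : 2 * (r - 1) ≤ k * (r - 1) := Nat.mul_le_mul_right _ hk
      have h5 : k * 1 ≤ k * (r - 1) := Nat.mul_le_mul_left _ (by omega)
      set q := k * (r - 1)
      omega
  have hE : (H₁.edges ∪ H₂.edges).card = H₂.edges.card + T.card := by
    rw [hT, ← Finset.card_sdiff_add_card (s := H₁.edges) (t := H₂.edges)]
    omega
  have hV : (H₁.verts ∪ H₂.verts).card = H₂.verts.card + S.card := by
    rw [hS, ← Finset.card_sdiff_add_card (s := H₁.verts) (t := H₂.verts)]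
    omega
  have hkey' : (S.card : ℤ) + 1 ≤ ((r : ℤ) - 1) * T.card := by
    have := hkey
    zify at this
    rwa [Nat.cast_sub (by omega : 1 ≤ r)] at this
  show H₂.excess + 1 ≤ ((r:ℤ) - 1) * (H₁.edges ∪ H₂.edges).card - (H₁.verts ∪ H₂.verts).card
  unfold UHypergraph.excess
  rw [hE, hV]
  push_cast
  nlinarith [hkey']
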